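/- For every x ∈ ℝ^d and every finite nonempty set V ⊆ ℝ^N, the worst-case recourse cost over the convex hull of V equals the worst case over V itself: sup_{ξ ∈ convexHull ℝ V} Q̂(x, ξ) = sup_{ξ ∈ V} Q̂(x, ξ), and this supremum is attained at some point of V. -/

import Mathlib

open Matrix

/-- Second-stage (recourse) value function:
`Q̂(x, ξ) = inf { c_viol ⬝ s : p, s, s ≥ 0, H x + D p − s ≤ E ξ + h }`. -/
noncomputable def Qhat {d g m N : ℕ} (H : Matrix (Fin m) (Fin d) ℝ)
    (D : Matrix (Fin m) (Fin g) ℝ) (E : Matrix (Fin m) (Fin N) ℝ)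
    (h : Fin m → ℝ) (cviol : Fin m → ℝ) (x : Fin d → ℝ) (ξ : Fin N → ℝ) : ℝ :=
  sInf { v : ℝ | ∃ (p : Fin g → ℝ) (s : Fin m → ℝ),
    (∀ i, 0 ≤ s i) ∧
    (∀ i, (H.mulVec x + D.mulVec p - s) i ≤ (E.mulVec ξ + h) i) ∧
    v = cviol ⬝ᵥ s }

section Aux

variable {d g m N : ℕ}
    (H : Matrix (Fin m) (Fin d) ℝ) (D : Matrix (Fin m) (Fin g) ℝ)
    (E : Matrix (Fin m) (Fin N) ℝ) (h : Fin m → ℝ) (cviol : Fin m → ℝ)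
    (x : Fin d → ℝ)

/-- The feasible-value set. -/
def QSet (ξ : Fin N → ℝ) : Set ℝ :=
  { v : ℝ | ∃ (p : Fin g → ℝ) (s : Fin m → ℝ),
    (∀ i, 0 ≤ s i) ∧
    (∀ i, (H.mulVec x + D.mulVec p - s) i ≤ (E.mulVec ξ + h) i) ∧
    v = cviol ⬝ᵥ s }

lemma Qhat_eq (ξ : Fin N → ℝ) :
    Qhat H D E h cviol x ξ = sInf (QSet H D E h cviol x ξ) := rfl

lemma QSet_nonempty (ξ : Fin N → ℝ) : (QSet H D E h cviol x ξ).Nonempty := by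
  refine ⟨cviol ⬝ᵥ (fun i => max 0 ((H.mulVec x - E.mulVec ξ - h) i)), 0,
    fun i => max 0 ((H.mulVec x - E.mulVec ξ - h) i), fun i => le_max_left _ _, ?_, rfl⟩
  intro i
  have := le_max_right 0 ((H.mulVec x - E.mulVec ξ - h) i)
  simp only [Matrix.mulVec_zero, Pi.add_apply, Pi.sub_apply, Pi.zero_apply] at this ⊢
  linarith

lemma QSet_bddBelow (hcviol : ∀ i, 0 ≤ cviol i) (ξ : Fin N → ℝ) :
    ∀ v ∈ QSet H D E h cviol x ξ, (0 : ℝ) ≤ v := by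
  rintro v ⟨p, s, hs, _, rfl⟩
  exact Finset.sum_nonneg fun i _ => mul_nonneg (hcviol i) (hs i)

lemma Qhat_combo (hcviol : ∀ i, 0 ≤ cviol i) {ι : Type*} (t : Finset ι)
    (w : ι → ℝ) (z : ι → Fin N → ℝ) (hw0 : ∀ i ∈ t, 0 ≤ w i)
    (hw1 : ∑ i ∈ t, w i = 1) :
    Qhat H D E h cviol x (∑ i ∈ t, w i • z i) ≤
      ∑ i ∈ t, w i * Qhat H D E h cviol x (z i) := by
  refine le_of_forall_pos_le_add fun ε hε => ?_
  -- choose near-optimal feasible points for each vertex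
  have hchoice : ∀ i : ι, ∃ (p : Fin g → ℝ) (s : Fin m → ℝ),
      (∀ j, 0 ≤ s j) ∧
      (∀ j, (H.mulVec x + D.mulVec p - s) j ≤ (E.mulVec (z i) + h) j) ∧
      cviol ⬝ᵥ s < Qhat H D E h cviol x (z i) + ε := by
    intro i
    obtain ⟨a, ha, hlt⟩ := Real.lt_sInf_add_pos (QSet_nonempty H D E h cviol x (z i)) hε
    obtain ⟨p, s, hs, hfeas, rfl⟩ := ha
    exact ⟨p, s, hs, hfeas, hlt⟩
  choose p s hs hfeas hlt using hchoice
  set P : Fin g → ℝ := ∑ i ∈ t, w i • p i with hP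
  set S : Fin m → ℝ := ∑ i ∈ t, w i • s i with hS
  have hSapp : ∀ j, S j = ∑ i ∈ t, w i * s i j := by
    intro j; simp [hS, Finset.sum_apply]
  have hPapp : D.mulVec P = ∑ i ∈ t, w i • D.mulVec (p i) := by
    simp only [hP, ← Matrix.mulVecLin_apply, map_sum, _root_.map_smul]
  have hmem : cviol ⬝ᵥ S ∈ QSet H D E h cviol x (∑ i ∈ t, w i • z i) := by
    refine ⟨P, S, ?_, ?_, rfl⟩
    · intro j
      rw [hSapp]
      exact Finset.sum_nonneg fun i hi => mul_nonneg (hw0 i hi) (hs i j)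
    · intro j
      have hE : E.mulVec (∑ i ∈ t, w i • z i) = ∑ i ∈ t, w i • E.mulVec (z i) := by
        simp only [← Matrix.mulVecLin_apply, map_sum, _root_.map_smul]
      have key : ∑ i ∈ t, w i * ((H.mulVec x + D.mulVec (p i) - s i) j) ≤
          ∑ i ∈ t, w i * ((E.mulVec (z i) + h) j) :=
        Finset.sum_le_sum fun i hi =>
          mul_le_mul_of_nonneg_left (hfeas i j) (hw0 i hi)
      have hHx : (H.mulVec x) j = ∑ i ∈ t, w i * (H.mulVec x) j := by
        rw [← Finset.sum_mul, hw1, one_mul]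
      have hh : h j = ∑ i ∈ t, w i * h j := by
        rw [← Finset.sum_mul, hw1, one_mul]
      simp only [Pi.add_apply, Pi.sub_apply]
      rw [hE, hPapp, hSapp]
      simp only [Finset.sum_apply, Pi.smul_apply, smul_eq_mul]
      rw [hHx, hh]
      simp only [Pi.add_apply, Pi.sub_apply, mul_sub, mul_add] at key
      rw [Finset.sum_sub_distrib, Finset.sum_add_distrib, Finset.sum_add_distrib] at key
      linarith
  have hcost : cviol ⬝ᵥ S = ∑ i ∈ t, w i * (cviol ⬝ᵥ s i) := by
    simp only [dotProduct, hSapp, Finset.mul_sum]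
    rw [Finset.sum_comm]
    exact Finset.sum_congr rfl fun i _ => Finset.sum_congr rfl fun j _ => by ring
  have h1 : Qhat H D E h cviol x (∑ i ∈ t, w i • z i) ≤ cviol ⬝ᵥ S :=
    csInf_le ⟨0, fun v hv => QSet_bddBelow H D E h cviol x hcviol _ v hv⟩ hmem
  have h2 : ∑ i ∈ t, w i * (cviol ⬝ᵥ s i) ≤
      ∑ i ∈ t, w i * (Qhat H D E h cviol x (z i) + ε) :=
    Finset.sum_le_sum fun i hi =>
      mul_le_mul_of_nonneg_left (le_of_lt (hlt i)) (hw0 i hi)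
  have h3 : ∑ i ∈ t, w i * (Qhat H D E h cviol x (z i) + ε) =
      (∑ i ∈ t, w i * Qhat H D E h cviol x (z i)) + ε := by
    simp only [mul_add, Finset.sum_add_distrib, ← Finset.sum_mul, hw1, one_mul]
  linarith [h1, hcost ▸ h1, h2]

end Aux

/-- The worst-case recourse cost over the convex hull of a finite nonempty set `V`
equals the worst case over `V` itself, and the supremum is attained at a point of `V`. -/
theorem worst_case_over_convexHull_eq_over_vertices
    {d g m N : ℕ}
    (H : Matrix (Fin m) (Fin d) ℝ) (D : Matrix (Fin m) (Fin g) ℝ)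
    (E : Matrix (Fin m) (Fin N) ℝ) (h : Fin m → ℝ) (cviol : Fin m → ℝ)
    (hcviol : ∀ i, 0 ≤ cviol i)
    (x : Fin d → ℝ)
    (V : Set (Fin N → ℝ)) (hVfin : V.Finite) (hVne : V.Nonempty) :
    sSup ((fun ξ => Qhat H D E h cviol x ξ) '' (convexHull ℝ V)) =
      sSup ((fun ξ => Qhat H D E h cviol x ξ) '' V) ∧
    ∃ v ∈ V, Qhat H D E h cviol x v =
      sSup ((fun ξ => Qhat H D E h cviol x ξ) '' (convexHull ℝ V)) := by
  set f : (Fin N → ℝ) → ℝ := fun ξ => Qhat H D E h cviol x ξ with hf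
  have hfinV : (f '' V).Finite := hVfin.image f
  have hneV : (f '' V).Nonempty := hVne.image f
  have hbddV : BddAbove (f '' V) := hfinV.bddAbove
  set M := sSup (f '' V) with hM
  have hbound : ∀ ξ ∈ convexHull ℝ V, f ξ ≤ M := by
    intro ξ hξ
    rw [convexHull_eq] at hξ
    obtain ⟨ι, t, w, z, hw0, hw1, hz, hcm⟩ := hξ
    have hcm' : ξ = ∑ i ∈ t, w i • z i := by
      rw [← hcm, Finset.centerMass_eq_of_sum_1 _ _ hw1]
    calc f ξ ≤ ∑ i ∈ t, w i * f (z i) := by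
          rw [hcm']
          exact Qhat_combo H D E h cviol x hcviol t w z hw0 hw1
      _ ≤ ∑ i ∈ t, w i * M := by
          refine Finset.sum_le_sum fun i hi => ?_
          exact mul_le_mul_of_nonneg_left
            (le_csSup hbddV ⟨z i, hz i hi, rfl⟩) (hw0 i hi)
      _ = M := by rw [← Finset.sum_mul, hw1, one_mul]
  have hhullne : (convexHull ℝ V).Nonempty := hVne.mono (subset_convexHull ℝ V)
  have hbddH : BddAbove (f '' (convexHull ℝ V)) := by
    refine ⟨M, ?_⟩
    rintro y ⟨ξ, hξ, rfl⟩
    exact hbound ξ hξ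
  have hle : sSup (f '' convexHull ℝ V) ≤ M := by
    refine csSup_le (hhullne.image f) ?_
    rintro y ⟨ξ, hξ, rfl⟩
    exact hbound ξ hξ
  have hge : M ≤ sSup (f '' convexHull ℝ V) :=
    csSup_le_csSup hbddH hneV (Set.image_mono (f := f) (subset_convexHull ℝ V))
  have heq : sSup (f '' convexHull ℝ V) = M := le_antisymm hle hge
  refine ⟨heq, ?_⟩
  obtain ⟨v, hv, hvM⟩ := hneV.csSup_mem hfinV
  exact ⟨v, hv, by rw [heq]; exact hvM⟩
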